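/- arXiv:1605.03841 — 2 statements merged into one kernel-verified Lean document; each statement's English description precedes it below -/
import Mathlib

section
/- Let K be a commutative ring. The K-algebra presented by generators v₁,…,vₙ, e₁,…,eₙ₋₁, e₁*,…,eₙ₋₁* with relations vᵢvⱼ = δᵢⱼvᵢ, vᵢeᵢ = eᵢ = eᵢvᵢ₊₁, vᵢ₊₁eᵢ* = eᵢ* = eᵢ*vᵢ, eᵢ*eⱼ = δᵢⱼvᵢ₊₁, and vᵢ = eᵢeᵢ* for i < n, is isomorphic to the full matrix algebra Mₙ(K), via vᵢ ↦ Eᵢᵢ, eᵢ ↦ E_{i,i+1}, eᵢ* ↦ E_{i+1,i}. -/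
universe u
noncomputable section

variable (K : Type u) [CommRing K] (n : ℕ)

/-- Generators of the Leavitt path algebra of the line graph `A_{n+1}`:
`n+1` vertices, `n` edges and `n` ghost edges. -/
abbrev LineGen (n : ℕ) := Fin (n + 1) ⊕ Fin n ⊕ Fin n

/-- The vertex generator `vᵢ`. -/
def Vg (i : Fin (n + 1)) : FreeAlgebra K (LineGen n) := FreeAlgebra.ι K (Sum.inl i)
/-- The edge generator `eᵢ : vᵢ → vᵢ₊₁`. -/
def Eg (i : Fin n) : FreeAlgebra K (LineGen n) := FreeAlgebra.ι K (Sum.inr (Sum.inl i))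
/-- The ghost edge generator `eᵢ*`. -/
def Sg (i : Fin n) : FreeAlgebra K (LineGen n) := FreeAlgebra.ι K (Sum.inr (Sum.inr i))

/-- The defining relations of the Leavitt path algebra of the line graph:
`vᵢvⱼ = δᵢⱼvᵢ`, `vᵢeᵢ = eᵢ = eᵢvᵢ₊₁`, `vᵢ₊₁eᵢ* = eᵢ* = eᵢ*vᵢ`, `eᵢ*eⱼ = δᵢⱼvᵢ₊₁`,
`vᵢ = eᵢeᵢ*` (for `i < n`), together with `Σᵢ vᵢ = 1` (the identity of the
Leavitt path algebra is the sum of the vertices). -/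
inductive lineRel : FreeAlgebra K (LineGen n) → FreeAlgebra K (LineGen n) → Prop
  | vv (i j : Fin (n + 1)) : lineRel (Vg K n i * Vg K n j) (if i = j then Vg K n i else 0)
  | ve (i : Fin n) : lineRel (Vg K n i.castSucc * Eg K n i) (Eg K n i)
  | ev (i : Fin n) : lineRel (Eg K n i * Vg K n i.succ) (Eg K n i)
  | vs (i : Fin n) : lineRel (Vg K n i.succ * Sg K n i) (Sg K n i)
  | sv (i : Fin n) : lineRel (Sg K n i * Vg K n i.castSucc) (Sg K n i)
  | ck1 (i j : Fin n) : lineRel (Sg K n i * Eg K n j) (if i = j then Vg K n i.succ else 0)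
  | ck2 (i : Fin n) : lineRel (Vg K n i.castSucc) (Eg K n i * Sg K n i)
  | unit : lineRel (∑ i : Fin (n + 1), Vg K n i) 1

/-- The presented algebra (the Leavitt path algebra of the line graph `A_{n+1}`). -/
abbrev LinePathAlgebra := RingQuot (lineRel K n)

/-- The quotient map. -/
def pmk : FreeAlgebra K (LineGen n) →ₐ[K] LinePathAlgebra K n :=
  RingQuot.mkAlgHom K (lineRel K n)

open Matrix in
def genMap : LineGen n → Matrix (Fin (n + 1)) (Fin (n + 1)) K
  | Sum.inl i => Matrix.single i i 1
  | Sum.inr (Sum.inl i) => Matrix.single i.castSucc i.succ 1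
  | Sum.inr (Sum.inr i) => Matrix.single i.succ i.castSucc 1

lemma diag_sum : ∑ i : Fin (n + 1), Matrix.single i i (1 : K) = 1 := by
  ext a b
  rw [Matrix.sum_apply]
  by_cases h : a = b
  · subst h
    rw [Matrix.one_apply_eq, Finset.sum_eq_single a]
    · exact Matrix.single_apply_same a a 1
    · intro i _ hne
      exact Matrix.single_apply_of_ne _ _ _ _ _ (by rintro ⟨rfl, -⟩; exact hne rfl)
    · simp
  · rw [Matrix.one_apply_ne h]
    refine Finset.sum_eq_zero fun i _ => ?_
    exact Matrix.single_apply_of_ne _ _ _ _ _ (by rintro ⟨rfl, rfl⟩; exact h rfl)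

lemma genRel : ∀ ⦃x y : FreeAlgebra K (LineGen n)⦄, lineRel K n x y →
    FreeAlgebra.lift K (genMap K n) x = FreeAlgebra.lift K (genMap K n) y := by
  intro x y h
  induction h with
  | vv i j =>
      by_cases h : i = j
      · subst h
        simp [Vg, genMap, Matrix.single_mul_single_same]
      · simp [Vg, genMap, h, Matrix.single_mul_single_of_ne (h := h)]
  | ve i =>
      simp [Vg, Eg, genMap, Matrix.single_mul_single_same]
  | ev i =>
      simp [Vg, Eg, genMap, Matrix.single_mul_single_same]
  | vs i =>
      simp [Vg, Sg, genMap, Matrix.single_mul_single_same]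
  | sv i =>
      simp [Vg, Sg, genMap, Matrix.single_mul_single_same]
  | ck1 i j =>
      by_cases h : i = j
      · subst h
        simp [Eg, Sg, Vg, genMap, Matrix.single_mul_single_same]
      · have h' : i.castSucc ≠ j.castSucc := by simpa using h
        simp [Eg, Sg, genMap, h, Matrix.single_mul_single_of_ne (h := h')]
  | ck2 i =>
      simp [Eg, Sg, Vg, genMap, Matrix.single_mul_single_same]
  | unit =>
      simp [Vg, genMap, diag_sum]

def Fmat : LinePathAlgebra K n →ₐ[K] Matrix (Fin (n + 1)) (Fin (n + 1)) K :=
  RingQuot.liftAlgHom K ⟨FreeAlgebra.lift K (genMap K n), genRel K n⟩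

lemma Fmat_pmk (x : FreeAlgebra K (LineGen n)) :
    Fmat K n (pmk K n x) = FreeAlgebra.lift K (genMap K n) x :=
  RingQuot.liftAlgHom_mkAlgHom_apply K _ (genRel K n) x
/-- Vertex generator in the quotient. -/
def Vq (i : Fin (n + 1)) : LinePathAlgebra K n := pmk K n (Vg K n i)
/-- Edge generator in the quotient. -/
def Eq' (i : Fin n) : LinePathAlgebra K n := pmk K n (Eg K n i)
/-- Ghost edge generator in the quotient. -/
def Sq (i : Fin n) : LinePathAlgebra K n := pmk K n (Sg K n i)

lemma quot_rel {x y : FreeAlgebra K (LineGen n)} (h : lineRel K n x y) :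
    pmk K n x = pmk K n y :=
  RingQuot.mkAlgHom_rel K h

lemma VqVq (i j : Fin (n + 1)) : Vq K n i * Vq K n j = if i = j then Vq K n i else 0 := by
  have h := quot_rel K n (lineRel.vv i j)
  rw [map_mul] at h
  unfold Vq
  rw [h, apply_ite (pmk K n), map_zero]

lemma unit_sum : ∑ i : Fin (n + 1), Vq K n i = 1 := by
  have h := quot_rel K n (lineRel.unit (K := K) (n := n))
  rw [map_sum, map_one] at h
  exact h

/-- ℕ-indexed vertex element (`0` out of range). -/
def Vn (a : ℕ) : LinePathAlgebra K n := if h : a < n + 1 then Vq K n ⟨a, h⟩ else 0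
/-- ℕ-indexed edge element (`0` out of range). -/
def En (a : ℕ) : LinePathAlgebra K n := if h : a < n then Eq' K n ⟨a, h⟩ else 0
/-- ℕ-indexed ghost edge element (`0` out of range). -/
def Sn (a : ℕ) : LinePathAlgebra K n := if h : a < n then Sq K n ⟨a, h⟩ else 0

lemma VnVn (a b : ℕ) : Vn K n a * Vn K n b = if a = b then Vn K n a else 0 := by
  unfold Vn
  by_cases ha : a < n + 1 <;> by_cases hb : b < n + 1 <;>
    simp only [ha, hb, dif_pos, dif_neg, not_false_iff, mul_zero, zero_mul]
  · rw [VqVq]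
    by_cases h : a = b
    · subst h; simp
    · have : (⟨a, ha⟩ : Fin (n + 1)) ≠ ⟨b, hb⟩ := by simp [Fin.ext_iff, h]
      simp [h, this]
  · have : a ≠ b := by omega
    simp [this]
  · have : a ≠ b := by omega
    simp [this]
  · by_cases h : a = b <;> simp [h]

lemma VnVn_self (a : ℕ) : Vn K n a * Vn K n a = Vn K n a := by simp [VnVn]

lemma VE (a : ℕ) (h : a < n) : Vn K n a * En K n a = En K n a := by
  have h2 := quot_rel K n (lineRel.ve (K := K) (n := n) ⟨a, h⟩)
  rw [map_mul] at h2
  simpa [Vn, En, h, Nat.lt_succ_of_lt h, Fin.castSucc_mk, Vq, Eq'] using h2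

lemma EV (a : ℕ) (h : a < n) : En K n a * Vn K n (a + 1) = En K n a := by
  have h2 := quot_rel K n (lineRel.ev (K := K) (n := n) ⟨a, h⟩)
  rw [map_mul] at h2
  simpa [Vn, En, h, Nat.succ_lt_succ h, Fin.succ_mk, Vq, Eq'] using h2

lemma VS (a : ℕ) (h : a < n) : Vn K n (a + 1) * Sn K n a = Sn K n a := by
  have h2 := quot_rel K n (lineRel.vs (K := K) (n := n) ⟨a, h⟩)
  rw [map_mul] at h2
  simpa [Vn, Sn, h, Nat.succ_lt_succ h, Fin.succ_mk, Vq, Sq] using h2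

lemma SV (a : ℕ) (h : a < n) : Sn K n a * Vn K n a = Sn K n a := by
  have h2 := quot_rel K n (lineRel.sv (K := K) (n := n) ⟨a, h⟩)
  rw [map_mul] at h2
  simpa [Vn, Sn, h, Nat.lt_succ_of_lt h, Fin.castSucc_mk, Vq, Sq] using h2

lemma SE (a b : ℕ) (ha : a < n) (hb : b < n) :
    Sn K n a * En K n b = if a = b then Vn K n (a + 1) else 0 := by
  have h2 := quot_rel K n (lineRel.ck1 (K := K) (n := n) ⟨a, ha⟩ ⟨b, hb⟩)
  rw [map_mul, apply_ite (pmk K n), map_zero] at h2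
  by_cases hab : a = b
  · subst hab
    rw [if_pos rfl] at h2
    rw [if_pos rfl]
    simpa [Vn, En, Sn, ha, Nat.succ_lt_succ ha, Fin.succ_mk, Vq, Eq', Sq] using h2
  · have hne : (⟨a, ha⟩ : Fin n) ≠ ⟨b, hb⟩ := by simp [Fin.ext_iff, hab]
    rw [if_neg hne] at h2
    rw [if_neg hab]
    simpa [Vn, En, Sn, ha, hb, Vq, Eq', Sq] using h2

lemma ES (a : ℕ) (h : a < n) : En K n a * Sn K n a = Vn K n a := by
  have h2 := quot_rel K n (lineRel.ck2 (K := K) (n := n) ⟨a, h⟩)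
  rw [map_mul] at h2
  simpa [Vn, En, Sn, h, Nat.lt_succ_of_lt h, Fin.castSucc_mk, Vq, Eq', Sq] using h2.symm

lemma EV' (a b : ℕ) (h : a < n) (hb : b ≠ a + 1) : En K n a * Vn K n b = 0 := by
  rw [← EV K n a h, mul_assoc, VnVn, if_neg (by omega), mul_zero]

lemma VE' (a b : ℕ) (h : a < n) (hb : b ≠ a) : Vn K n b * En K n a = 0 := by
  rw [← VE K n a h, ← mul_assoc, VnVn, if_neg hb, zero_mul]

lemma SV' (a b : ℕ) (h : a < n) (hb : b ≠ a) : Sn K n a * Vn K n b = 0 := by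
  rw [← SV K n a h, mul_assoc, VnVn, if_neg (by omega), mul_zero]

lemma VS' (a b : ℕ) (h : a < n) (hb : b ≠ a + 1) : Vn K n b * Sn K n a = 0 := by
  rw [← VS K n a h, ← mul_assoc, VnVn, if_neg hb, zero_mul]
/-- Product `e_a e_{a+1} ⋯ e_{a+k-1}` (a path of length `k` starting at `a`). -/
def U (a k : ℕ) : LinePathAlgebra K n := ((List.range' a k).map (En K n)).prod
/-- Product `s_{a+k-1} ⋯ s_{a+1} s_a` (a ghost path of length `k` ending at `a`). -/
def D (a k : ℕ) : LinePathAlgebra K n := (((List.range' a k).map (Sn K n)).reverse).prod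

@[simp] lemma U_zero (a : ℕ) : U K n a 0 = 1 := rfl
@[simp] lemma D_zero (a : ℕ) : D K n a 0 = 1 := rfl

lemma U_cons (a k : ℕ) : U K n a (k + 1) = En K n a * U K n (a + 1) k := by
  simp [U, List.range'_succ]

lemma U_concat (a k : ℕ) : U K n a (k + 1) = U K n a k * En K n (a + k) := by
  simp [U, List.range'_concat]

lemma D_cons (a k : ℕ) : D K n a (k + 1) = D K n (a + 1) k * Sn K n a := by
  simp [D, List.range'_succ]

lemma D_concat (a k : ℕ) : D K n a (k + 1) = Sn K n (a + k) * D K n a k := by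
  simp [D, List.range'_concat]

lemma U_app (a j k : ℕ) : U K n a j * U K n (a + j) k = U K n a (j + k) := by
  rw [U, U, U, ← List.prod_append, ← List.map_append]
  congr 1
  rw [show a + j = a + 1 * j by ring, List.range'_append]

lemma D_app (a j k : ℕ) : D K n (a + j) k * D K n a j = D K n a (j + k) := by
  rw [D, D, D, ← List.prod_append, ← List.reverse_append, ← List.map_append]
  congr 2
  rw [show a + j = a + 1 * j by ring, List.range'_append]

lemma UV_abs (a k : ℕ) (h : a + k < n) :
    U K n a (k + 1) * Vn K n (a + k + 1) = U K n a (k + 1) := by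
  rw [U_concat, mul_assoc, EV K n _ h]

lemma VU_abs (a k : ℕ) (h : a < n) :
    Vn K n a * U K n a (k + 1) = U K n a (k + 1) := by
  rw [U_cons, ← mul_assoc, VE K n _ h]

lemma DV_abs (a k : ℕ) (h : a < n) :
    D K n a (k + 1) * Vn K n a = D K n a (k + 1) := by
  rw [D_cons, mul_assoc, SV K n _ h]

lemma VD_abs (a k : ℕ) (h : a + k < n) :
    Vn K n (a + k + 1) * D K n a (k + 1) = D K n a (k + 1) := by
  rw [D_concat, ← mul_assoc, VS K n _ h]

lemma UD_cancel : ∀ (k a : ℕ), a + k + 1 ≤ n →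
    U K n a (k + 1) * D K n a (k + 1) = Vn K n a := by
  intro k
  induction k with
  | zero =>
      intro a h
      rw [U_cons, D_cons]
      simp only [U_zero, D_zero, mul_one, one_mul]
      exact ES K n a (by omega)
  | succ k ih =>
      intro a h
      rw [U_cons, D_cons, mul_assoc, ← mul_assoc (U K n (a + 1) (k + 1)),
        ih (a + 1) (by omega), VS K n a (by omega), ES K n a (by omega)]

lemma DU_cancel : ∀ (k a : ℕ), a + k + 1 ≤ n →
    D K n a (k + 1) * U K n a (k + 1) = Vn K n (a + k + 1) := by
  intro k
  induction k with
  | zero =>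
      intro a h
      rw [U_cons, D_cons]
      simp only [U_zero, D_zero, mul_one, one_mul]
      rw [SE K n a a (by omega) (by omega), if_pos rfl]
  | succ k ih =>
      intro a h
      rw [U_cons, D_cons, mul_assoc, ← mul_assoc (Sn K n a),
        SE K n a a (by omega) (by omega), if_pos rfl,
        VU_abs K n (a + 1) k (by omega), ih (a + 1) (by omega)]
      congr 1
      omega

/-- The element mapping to the matrix unit `E_{a b}`. -/
def wn (a b : ℕ) : LinePathAlgebra K n :=
  if a ≤ b then Vn K n a * U K n a (b - a) else Vn K n a * D K n b (a - b)

lemma wn_diag (a : ℕ) : wn K n a a = Vn K n a := by simp [wn]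

lemma wn_Vl (a b : ℕ) : Vn K n a * wn K n a b = wn K n a b := by
  unfold wn
  split <;> rw [← mul_assoc, VnVn_self]

lemma wn_Vr (a b : ℕ) (ha : a ≤ n) (hb : b ≤ n) : wn K n a b * Vn K n b = wn K n a b := by
  by_cases h : a ≤ b
  · rw [wn, if_pos h]
    rcases Nat.le.dest h with ⟨k, rfl⟩
    cases k with
    | zero => simp [mul_assoc, VnVn_self]
    | succ k =>
        rw [Nat.add_sub_cancel_left, mul_assoc, ← Nat.add_assoc, UV_abs K n a k (by omega)]
  · rw [wn, if_neg h]
    have hk : ∃ k, a = b + (k + 1) := ⟨a - b - 1, by omega⟩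
    rcases hk with ⟨k, rfl⟩
    rw [Nat.add_sub_cancel_left, mul_assoc, DV_abs K n b k (by omega)]
lemma VnU_Vr (a j : ℕ) (ha : a ≤ n) (hj : a + j ≤ n) :
    Vn K n a * U K n a j * Vn K n (a + j) = Vn K n a * U K n a j := by
  cases j with
  | zero => simp [VnVn_self]
  | succ j => rw [mul_assoc, ← Nat.add_assoc, UV_abs K n a j (by omega)]

lemma L_UU (a b d : ℕ) (hab : a ≤ b) (hbd : b ≤ d) :
    Vn K n a * U K n a (b - a) * U K n b (d - b) = Vn K n a * U K n a (d - a) := by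
  rcases Nat.le.dest hab with ⟨j, rfl⟩
  rcases Nat.le.dest hbd with ⟨k, rfl⟩
  have h1 : a + j - a = j := by omega
  have h2 : a + j + k - (a + j) = k := by omega
  have h3 : a + j + k - a = j + k := by omega
  rw [h1, h2, h3, mul_assoc, U_app]

lemma L_DD (a b d : ℕ) (hba : b ≤ a) (hdb : d ≤ b) :
    Vn K n a * D K n b (a - b) * D K n d (b - d) = Vn K n a * D K n d (a - d) := by
  rcases Nat.le.dest hdb with ⟨j, rfl⟩
  rcases Nat.le.dest hba with ⟨k, rfl⟩
  have h1 : d + j + k - (d + j) = k := by omega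
  have h2 : d + j - d = j := by omega
  have h3 : d + j + k - d = j + k := by omega
  rw [h1, h2, h3, mul_assoc, D_app]

lemma L_UD (a b d : ℕ) (hab : a ≤ b) (hdb : d ≤ b) (hb : b ≤ n) :
    Vn K n a * U K n a (b - a) * D K n d (b - d) = wn K n a d := by
  by_cases had : a ≤ d
  · rcases Nat.le.dest had with ⟨j, rfl⟩
    rcases Nat.le.dest hdb with ⟨k, rfl⟩
    have h1 : a + j + k - a = j + k := by omega
    have h2 : a + j + k - (a + j) = k := by omega
    rw [h1, h2, ← U_app K n a j k, mul_assoc, mul_assoc]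
    cases k with
    | zero =>
        rw [wn, if_pos had]
        have h3 : a + j - a = j := by omega
        rw [h3]
        simp [mul_assoc]
    | succ k =>
        rw [UD_cancel K n k (a + j) (by omega), ← mul_assoc,
          VnU_Vr K n a j (by omega) (by omega), wn, if_pos had]
        have h3 : a + j - a = j := by omega
        rw [h3]
  · have hda : ∃ j, a = d + (j + 1) := ⟨a - d - 1, by omega⟩
    rcases hda with ⟨j, rfl⟩
    rcases Nat.le.dest hab with ⟨k, rfl⟩
    have h1 : d + (j + 1) + k - (d + (j + 1)) = k := by omega
    have h2 : d + (j + 1) + k - d = (j + 1) + k := by omega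
    rw [h1, h2, ← D_app K n d (j + 1) k]
    cases k with
    | zero =>
        rw [wn, if_neg had]
        have h3 : d + (j + 1) - d = j + 1 := by omega
        rw [h3]
        simp
    | succ k =>
        rw [← mul_assoc, mul_assoc (Vn K n (d + (j + 1))),
          UD_cancel K n k (d + (j + 1)) (by omega), VnVn_self, wn, if_neg had]
        have h3 : d + (j + 1) - d = j + 1 := by omega
        rw [h3]

lemma L_DU (a b d : ℕ) (hba : b ≤ a) (hbd : b ≤ d) (ha : a ≤ n) (hd : d ≤ n) :
    Vn K n a * D K n b (a - b) * U K n b (d - b) = wn K n a d := by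
  by_cases had : a ≤ d
  · rcases Nat.le.dest hba with ⟨j, rfl⟩
    rcases Nat.le.dest had with ⟨k, rfl⟩
    have h1 : b + j - b = j := by omega
    have h2 : b + j + k - b = j + k := by omega
    rw [h1, h2, ← U_app K n b j k]
    cases j with
    | zero =>
        rw [wn, if_pos had]
        have h3 : b + 0 + k - (b + 0) = k := by omega
        rw [h3]
        simp
    | succ j =>
        rw [mul_assoc, ← mul_assoc (D K n b (j + 1)),
          DU_cancel K n j b (by omega)]
        rw [show b + j + 1 = b + (j + 1) by omega]
        rw [← mul_assoc, VnVn_self, wn, if_pos had]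
        have h3 : b + (j + 1) + k - (b + (j + 1)) = k := by omega
        rw [h3]
  · rcases Nat.le.dest hbd with ⟨j, rfl⟩
    have hda : ∃ k, a = (b + j) + (k + 1) := ⟨a - (b + j) - 1, by omega⟩
    rcases hda with ⟨k, rfl⟩
    have h1 : b + j + (k + 1) - b = j + (k + 1) := by omega
    have h2 : b + j - b = j := by omega
    rw [h1, h2, ← D_app K n b j (k + 1)]
    cases j with
    | zero =>
        rw [wn, if_neg had]
        have h3 : b + 0 + (k + 1) - (b + 0) = k + 1 := by omega
        rw [h3]
        simp
    | succ j =>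
        rw [mul_assoc, mul_assoc (D K n (b + (j + 1)) (k + 1)),
          DU_cancel K n j b (by omega)]
        rw [show b + j + 1 = b + (j + 1) by omega]
        rw [DV_abs K n (b + (j + 1)) k (by omega), wn, if_neg had]
        have h3 : b + (j + 1) + (k + 1) - (b + (j + 1)) = k + 1 := by omega
        rw [h3]

lemma wn_mul (a b c d : ℕ) (ha : a ≤ n) (hb : b ≤ n) (hc : c ≤ n) (hd : d ≤ n) :
    wn K n a b * wn K n c d = if b = c then wn K n a d else 0 := by
  by_cases hbc : b = c
  · subst hbc
    rw [if_pos rfl]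
    have key : ∀ Y : LinePathAlgebra K n,
        wn K n a b * (Vn K n b * Y) = wn K n a b * Y := fun Y => by
      rw [← mul_assoc, wn_Vr K n a b ha hb]
    by_cases hbd : b ≤ d
    · have hwd : wn K n b d = Vn K n b * U K n b (d - b) := by rw [wn, if_pos hbd]
      rw [hwd, key]
      by_cases hab : a ≤ b
      · rw [wn, if_pos hab, L_UU K n a b d hab hbd, wn, if_pos (le_trans hab hbd)]
      · rw [wn, if_neg hab]
        exact L_DU K n a b d (le_of_not_ge hab) hbd ha hd
    · have hwd : wn K n b d = Vn K n b * D K n d (b - d) := by rw [wn, if_neg hbd]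
      rw [hwd, key]
      by_cases hab : a ≤ b
      · rw [wn, if_pos hab]
        exact L_UD K n a b d hab (by omega) hb
      · rw [wn, if_neg hab, L_DD K n a b d (le_of_not_ge hab) (by omega), wn,
          if_neg (by omega)]
  · rw [if_neg hbc, ← wn_Vr K n a b ha hb, ← wn_Vl K n c d, mul_assoc,
      ← mul_assoc (Vn K n b), VnVn, if_neg hbc, zero_mul, mul_zero]
lemma F_Vq (i : Fin (n + 1)) :
    Fmat K n (Vq K n i) = Matrix.single i i 1 := by
  rw [Vq, Fmat_pmk]
  simp [Vg, genMap]

lemma F_Eq (i : Fin n) :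
    Fmat K n (Eq' K n i) = Matrix.single i.castSucc i.succ 1 := by
  rw [Eq', Fmat_pmk]
  simp [Eg, genMap]

lemma F_Sq (i : Fin n) :
    Fmat K n (Sq K n i) = Matrix.single i.succ i.castSucc 1 := by
  rw [Sq, Fmat_pmk]
  simp [Sg, genMap]

lemma F_Vn (a : ℕ) (h : a < n + 1) :
    Fmat K n (Vn K n a) = Matrix.single ⟨a, h⟩ ⟨a, h⟩ 1 := by
  rw [Vn, dif_pos h, F_Vq]

lemma F_En (a : ℕ) (h : a < n) :
    Fmat K n (En K n a) =
      Matrix.single ⟨a, by omega⟩ ⟨a + 1, by omega⟩ 1 := by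
  rw [En, dif_pos h, F_Eq]
  rfl

lemma F_Sn (a : ℕ) (h : a < n) :
    Fmat K n (Sn K n a) =
      Matrix.single ⟨a + 1, by omega⟩ ⟨a, by omega⟩ 1 := by
  rw [Sn, dif_pos h, F_Sq]
  rfl

lemma F_VnU : ∀ (k a : ℕ) (h : a + k ≤ n),
    Fmat K n (Vn K n a * U K n a k) =
      Matrix.single (Fin.mk a (by omega)) (Fin.mk (a + k) (by omega)) (1 : K) := by
  intro k
  induction k with
  | zero =>
      intro a h
      simp only [Nat.add_zero, U_zero, mul_one]
      exact F_Vn K n a (by omega)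
  | succ k ih =>
      intro a h
      rw [U_concat, ← mul_assoc, map_mul, ih a (by omega), F_En K n (a + k) (by omega),
        Matrix.single_mul_single_same, mul_one]
      have e : (Fin.mk (a + (k + 1)) (by omega) : Fin (n + 1)) = Fin.mk (a + k + 1) (by omega) := rfl
      rw [e]

lemma F_VnD : ∀ (k a : ℕ) (h : a + k ≤ n),
    Fmat K n (Vn K n (a + k) * D K n a k) =
      Matrix.single (Fin.mk (a + k) (by omega)) (Fin.mk a (by omega)) (1 : K) := by
  intro k
  induction k with
  | zero =>
      intro a h
      simp only [Nat.add_zero, D_zero, mul_one]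
      exact F_Vn K n a (by omega)
  | succ k ih =>
      intro a h
      have e : (Fin.mk (a + (k + 1)) (by omega) : Fin (n + 1)) = Fin.mk (a + 1 + k) (by omega) :=
        Fin.ext (show a + (k + 1) = a + 1 + k by omega)
      have e2 : Vn K n (a + (k + 1)) = Vn K n (a + 1 + k) := by
        rw [show a + (k + 1) = a + 1 + k by omega]
      rw [e, e2, D_cons, ← mul_assoc, map_mul, ih (a + 1) (by omega), F_Sn K n a (by omega),
        Matrix.single_mul_single_same, mul_one]

lemma std_congr {a b a' b' : Fin (n + 1)} (h1 : a = a') (h2 : b = b') :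
    Matrix.single a b (1 : K) = Matrix.single a' b' 1 := by
  rw [h1, h2]

lemma F_wn (i j : Fin (n + 1)) :
    Fmat K n (wn K n ↑i ↑j) = Matrix.single i j 1 := by
  have hi := Nat.lt_succ_iff.mp i.isLt
  have hj := Nat.lt_succ_iff.mp j.isLt
  by_cases h : (i : ℕ) ≤ (j : ℕ)
  · obtain ⟨k, hk⟩ := Nat.le.dest h
    have hkn : (i : ℕ) + k ≤ n := by omega
    rw [wn, if_pos h, show (j : ℕ) - ↑i = k by omega, F_VnU K n k ↑i hkn]
    exact std_congr K n (Fin.ext rfl) (Fin.ext hk)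
  · obtain ⟨k, hk⟩ := Nat.le.dest (show (j : ℕ) ≤ ↑i by omega)
    have hkn : (j : ℕ) + k ≤ n := by omega
    have e : Vn K n ↑i = Vn K n (↑j + k) := by rw [hk]
    rw [wn, if_neg h, show (i : ℕ) - ↑j = k by omega, e, F_VnD K n k ↑j hkn]
    exact std_congr K n (Fin.ext hk) (Fin.ext rfl)

lemma Vn_coe (i : Fin (n + 1)) : Vn K n ↑i = Vq K n i := by
  simp [Vn]
  intro h
  exact absurd h (by omega)

lemma wn_mul_fin (i j k l : Fin (n + 1)) :
    wn K n ↑i ↑j * wn K n ↑k ↑l = if j = k then wn K n ↑i ↑l else 0 := by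
  rw [wn_mul K n ↑i ↑j ↑k ↑l (Nat.lt_succ_iff.mp i.isLt) (Nat.lt_succ_iff.mp j.isLt)
    (Nat.lt_succ_iff.mp k.isLt) (Nat.lt_succ_iff.mp l.isLt)]
  simp only [Fin.val_inj]

/-- The linear map sending a matrix to the corresponding combination of path
elements. -/
def gL : Matrix (Fin (n + 1)) (Fin (n + 1)) K →ₗ[K] LinePathAlgebra K n where
  toFun M := ∑ i : Fin (n + 1), ∑ j : Fin (n + 1), M i j • wn K n ↑i ↑j
  map_add' M N := by
    simp [add_smul, Finset.sum_add_distrib]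
  map_smul' c M := by
    simp [Matrix.smul_apply, smul_smul, Finset.smul_sum]

lemma gL_std (i j : Fin (n + 1)) :
    gL K n (Matrix.single i j 1) = wn K n ↑i ↑j := by
  simp only [gL, LinearMap.coe_mk, AddHom.coe_mk]
  rw [Finset.sum_eq_single i]
  · rw [Finset.sum_eq_single j]
    · rw [Matrix.single_apply_same, one_smul]
    · intro b _ hb
      rw [Matrix.single_apply_of_ne _ _ _ _ _ (by rintro ⟨-, rfl⟩; exact hb rfl),
        zero_smul]
    · intro h; exact absurd (Finset.mem_univ j) h
  · intro a _ ha
    refine Finset.sum_eq_zero fun b _ => ?_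
    rw [Matrix.single_apply_of_ne _ _ _ _ _ (by rintro ⟨rfl, -⟩; exact ha rfl),
      zero_smul]
  · intro h; exact absurd (Finset.mem_univ i) h

lemma gL_one : gL K n 1 = 1 := by
  simp only [gL, LinearMap.coe_mk, AddHom.coe_mk]
  have h : ∀ i : Fin (n + 1),
      ∑ j : Fin (n + 1), (1 : Matrix (Fin (n + 1)) (Fin (n + 1)) K) i j • wn K n ↑i ↑j
        = Vq K n i := by
    intro i
    rw [Finset.sum_eq_single i]
    · rw [Matrix.one_apply_eq, one_smul, wn_diag, Vn_coe]
    · intro b _ hb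
      rw [Matrix.one_apply_ne (Ne.symm hb), zero_smul]
    · intro h; exact absurd (Finset.mem_univ i) h
  rw [Finset.sum_congr rfl fun i _ => h i, unit_sum]

lemma gL_mul (M N : Matrix (Fin (n + 1)) (Fin (n + 1)) K) :
    gL K n (M * N) = gL K n M * gL K n N := by
  simp only [gL, LinearMap.coe_mk, AddHom.coe_mk]
  rw [Finset.sum_mul_sum]
  have key : ∀ i k : Fin (n + 1),
      (∑ j : Fin (n + 1), M i j • wn K n ↑i ↑j) * (∑ l : Fin (n + 1), N k l • wn K n ↑k ↑l)
        = ∑ j : Fin (n + 1), ∑ l : Fin (n + 1),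
            (M i j * N k l) • (if j = k then wn K n ↑i ↑l else 0) := by
    intro i k
    rw [Finset.sum_mul_sum]
    exact Finset.sum_congr rfl fun j _ => Finset.sum_congr rfl fun l _ => by
      rw [smul_mul_smul_comm, wn_mul_fin]
  rw [Finset.sum_congr rfl fun i _ => Finset.sum_congr rfl fun k _ => key i k]
  refine Finset.sum_congr rfl fun i _ => ?_
  have lhs_eq : ∑ l : Fin (n + 1), (M * N) i l • wn K n ↑i ↑l
      = ∑ l : Fin (n + 1), ∑ j : Fin (n + 1), (M i j * N j l) • wn K n ↑i ↑l := by
    refine Finset.sum_congr rfl fun l _ => ?_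
    rw [Matrix.mul_apply, Finset.sum_smul]
  have rhs_eq : ∀ j : Fin (n + 1),
      (∑ k : Fin (n + 1), ∑ l : Fin (n + 1),
        (M i j * N k l) • (if j = k then wn K n ↑i ↑l else 0))
        = ∑ l : Fin (n + 1), (M i j * N j l) • wn K n ↑i ↑l := by
    intro j
    rw [Finset.sum_eq_single j]
    · exact Finset.sum_congr rfl fun l _ => by rw [if_pos rfl]
    · intro k _ hk
      exact Finset.sum_eq_zero fun l _ => by
        rw [if_neg (fun hh => hk hh.symm), smul_zero]
    · intro hm; exact absurd (Finset.mem_univ j) hm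
  rw [lhs_eq, Finset.sum_comm]
  conv_rhs => rw [Finset.sum_comm]
  exact Finset.sum_congr rfl fun j _ => (rhs_eq j).symm
/-- The inverse algebra homomorphism from matrices. -/
def Gmat : Matrix (Fin (n + 1)) (Fin (n + 1)) K →ₐ[K] LinePathAlgebra K n :=
  AlgHom.ofLinearMap (gL K n) (gL_one K n) (gL_mul K n)

lemma Gmat_apply (M : Matrix (Fin (n + 1)) (Fin (n + 1)) K) :
    Gmat K n M = gL K n M := rfl

lemma FG (M : Matrix (Fin (n + 1)) (Fin (n + 1)) K) :
    Fmat K n (Gmat K n M) = M := by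
  rw [Gmat_apply]
  show Fmat K n (∑ i : Fin (n + 1), ∑ j : Fin (n + 1), M i j • wn K n ↑i ↑j) = M
  rw [map_sum, Finset.sum_congr rfl fun i _ => map_sum (Fmat K n) _ Finset.univ]
  calc ∑ i : Fin (n + 1), ∑ j : Fin (n + 1), Fmat K n (M i j • wn K n ↑i ↑j)
      = ∑ i : Fin (n + 1), ∑ j : Fin (n + 1), Matrix.single i j (M i j) := by
        refine Finset.sum_congr rfl fun i _ => Finset.sum_congr rfl fun j _ => ?_
        rw [map_smul, F_wn, Matrix.smul_single, smul_eq_mul, mul_one]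
    _ = M := (Matrix.matrix_eq_sum_single M).symm

lemma En_coe (i : Fin n) : En K n ↑i = Eq' K n i := by
  simp [En]

lemma Sn_coe (i : Fin n) : Sn K n ↑i = Sq K n i := by
  simp [Sn]

lemma wn_edge (a : ℕ) (h : a < n) : wn K n a (a + 1) = En K n a := by
  rw [wn, if_pos (by omega), show a + 1 - a = 1 by omega, U_cons]
  simp only [U_zero, mul_one]
  exact VE K n a h

lemma wn_ghost (a : ℕ) (h : a < n) : wn K n (a + 1) a = Sn K n a := by
  rw [wn, if_neg (by omega), show a + 1 - a = 1 by omega, D_cons]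
  simp only [D_zero, one_mul]
  exact VS K n a h

lemma GF : (Gmat K n).comp (Fmat K n) = AlgHom.id K (LinePathAlgebra K n) := by
  refine RingQuot.ringQuot_ext' K _ _ (FreeAlgebra.hom_ext (funext fun x => ?_))
  rcases x with i | i | i
  · show Gmat K n (Fmat K n (pmk K n (Vg K n i))) = pmk K n (Vg K n i)
    rw [show Fmat K n (pmk K n (Vg K n i)) = Matrix.single i i 1 from F_Vq K n i,
      Gmat_apply, gL_std, wn_diag, Vn_coe]
    rfl
  · show Gmat K n (Fmat K n (pmk K n (Eg K n i))) = pmk K n (Eg K n i)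
    rw [show Fmat K n (pmk K n (Eg K n i)) =
        Matrix.single i.castSucc i.succ 1 from F_Eq K n i,
      Gmat_apply, gL_std]
    have hc : ((i.castSucc : Fin (n + 1)) : ℕ) = (i : ℕ) := by simp
    have hs : ((i.succ : Fin (n + 1)) : ℕ) = (i : ℕ) + 1 := by simp
    rw [hc, hs, wn_edge K n ↑i i.isLt, En_coe]
    rfl
  · show Gmat K n (Fmat K n (pmk K n (Sg K n i))) = pmk K n (Sg K n i)
    rw [show Fmat K n (pmk K n (Sg K n i)) =
        Matrix.single i.succ i.castSucc 1 from F_Sq K n i,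
      Gmat_apply, gL_std]
    have hc : ((i.castSucc : Fin (n + 1)) : ℕ) = (i : ℕ) := by simp
    have hs : ((i.succ : Fin (n + 1)) : ℕ) = (i : ℕ) + 1 := by simp
    rw [hc, hs, wn_ghost K n ↑i i.isLt, Sn_coe]
    rfl

/-- The isomorphism. -/
def lineEquiv : LinePathAlgebra K n ≃ₐ[K] Matrix (Fin (n + 1)) (Fin (n + 1)) K :=
  AlgEquiv.ofAlgHom (Fmat K n) (Gmat K n) (AlgHom.ext (FG K n)) (GF K n)

theorem stmt_3' :
    ∃ φ : LinePathAlgebra K n ≃ₐ[K] Matrix (Fin (n + 1)) (Fin (n + 1)) K,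
      (∀ i : Fin (n + 1), φ (pmk K n (Vg K n i)) = Matrix.single i i 1) ∧
      (∀ i : Fin n, φ (pmk K n (Eg K n i)) = Matrix.single i.castSucc i.succ 1) ∧
      (∀ i : Fin n, φ (pmk K n (Sg K n i)) = Matrix.single i.succ i.castSucc 1) := by
  refine ⟨lineEquiv K n, fun i => ?_, fun i => ?_, fun i => ?_⟩
  · exact F_Vq K n i
  · exact F_Eq K n i
  · exact F_Sq K n i

/-- for a commutative ring `K`, the `K`-algebra presented by the
generators `vᵢ, eᵢ, eᵢ*` and the Leavitt path algebra relations of the line graph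
with `n+1` vertices is isomorphic to the full matrix algebra `M_{n+1}(K)`, via
`vᵢ ↦ Eᵢᵢ`, `eᵢ ↦ E_{i,i+1}`, `eᵢ* ↦ E_{i+1,i}`. -/
theorem stmt_3 :
    ∃ φ : LinePathAlgebra K n ≃ₐ[K] Matrix (Fin (n + 1)) (Fin (n + 1)) K,
      (∀ i : Fin (n + 1), φ (pmk K n (Vg K n i)) = Matrix.single i i 1) ∧
      (∀ i : Fin n, φ (pmk K n (Eg K n i)) = Matrix.single i.castSucc i.succ 1) ∧
      (∀ i : Fin n, φ (pmk K n (Sg K n i)) = Matrix.single i.succ i.castSucc 1) := by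
  exact stmt_3' K n
end
end

section
/- Let K be a field. Then the Jacobson algebra A = K⟨x,y⟩/(xy − 1) has a K-vector space basis given by the set {yⁱxʲ : i, j ≥ 0}. -/
universe u
noncomputable section

variable (K : Type u) [Field K]

/-- The generator `x` of the free algebra `K⟨x,y⟩`. -/
def Xgen : FreeAlgebra K Bool := FreeAlgebra.ι K true
/-- The generator `y` of the free algebra `K⟨x,y⟩`. -/
def Ygen : FreeAlgebra K Bool := FreeAlgebra.ι K false

/-- The relation `xy = 1`, generating the two-sided ideal `(xy − 1)`. -/
inductive jacRel : FreeAlgebra K Bool → FreeAlgebra K Bool → Prop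
  | rel : jacRel (Xgen K * Ygen K) 1

/-- The Jacobson algebra `A = K⟨x,y⟩/(xy − 1)`. -/
abbrev JacobsonAlgebra := RingQuot (jacRel K)

/-- The quotient map `K⟨x,y⟩ → A`. -/
def jmk : FreeAlgebra K Bool →ₐ[K] JacobsonAlgebra K := RingQuot.mkAlgHom K (jacRel K)

/-! ### Auxiliary development -/

/-- Index map for the action of `x` on the "monomial" module `(ℕ×ℕ) →₀ K`. -/
def gX : ℕ × ℕ → ℕ × ℕ
  | (0, j) => (0, j + 1)
  | (i + 1, j) => (i, j)

/-- Index map for the action of `y`. -/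
def gY : ℕ × ℕ → ℕ × ℕ := fun p => (p.1 + 1, p.2)

lemma gX_gY (p : ℕ × ℕ) : gX (gY p) = p := rfl

/-- The linear action of `x`. -/
def Xop : ((ℕ × ℕ) →₀ K) →ₗ[K] ((ℕ × ℕ) →₀ K) := Finsupp.lmapDomain K K gX
/-- The linear action of `y`. -/
def Yop : ((ℕ × ℕ) →₀ K) →ₗ[K] ((ℕ × ℕ) →₀ K) := Finsupp.lmapDomain K K gY

lemma Xop_Yop : Xop K * Yop K = 1 := by
  apply LinearMap.ext
  intro v
  show Xop K (Yop K v) = v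
  simp only [Xop, Yop, Finsupp.lmapDomain_apply, ← Finsupp.mapDomain_comp]
  have : gX ∘ gY = id := funext gX_gY
  rw [this, Finsupp.mapDomain_id]

/-- The representation of the free algebra on `(ℕ×ℕ) →₀ K`. -/
def rho : FreeAlgebra K Bool →ₐ[K] Module.End K ((ℕ × ℕ) →₀ K) :=
  FreeAlgebra.lift K (fun b => if b then Xop K else Yop K)

lemma rho_rel : ∀ ⦃a b⦄, jacRel K a b → rho K a = rho K b := by
  rintro _ _ ⟨⟩
  simp [rho, Xgen, Ygen, Xop_Yop]

/-- The induced representation of the Jacobson algebra. -/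
def rhoBar : JacobsonAlgebra K →ₐ[K] Module.End K ((ℕ × ℕ) →₀ K) :=
  RingQuot.liftAlgHom K ⟨rho K, rho_rel K⟩

lemma rho_x : rho K (Xgen K) = Xop K := by simp [rho, Xgen]
lemma rho_y : rho K (Ygen K) = Yop K := by simp [rho, Ygen]

lemma Xop_pow (j : ℕ) : (Xop K ^ j) (Finsupp.single ((0 : ℕ), (0 : ℕ)) (1 : K))
    = Finsupp.single (0, j) 1 := by
  induction j with
  | zero => simp
  | succ n ih =>
    rw [pow_succ']
    show Xop K ((Xop K ^ n) _) = _
    rw [ih]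
    simp [Xop, Finsupp.mapDomain_single, gX]

lemma Yop_pow (i j : ℕ) : (Yop K ^ i) (Finsupp.single ((0 : ℕ), j) (1 : K))
    = Finsupp.single (i, j) 1 := by
  induction i with
  | zero => simp
  | succ n ih =>
    rw [pow_succ']
    show Yop K ((Yop K ^ n) _) = _
    rw [ih]
    simp [Yop, Finsupp.mapDomain_single, gY]

/-- The monomial family in the Jacobson algebra. -/
def jfam : ℕ × ℕ → JacobsonAlgebra K := fun p => jmk K (Ygen K ^ p.1 * Xgen K ^ p.2)

lemma rhoBar_jfam (p : ℕ × ℕ) :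
    rhoBar K (jfam K p) (Finsupp.single ((0 : ℕ), (0 : ℕ)) (1 : K))
      = Finsupp.single p 1 := by
  obtain ⟨i, j⟩ := p
  simp only [jfam, jmk, rhoBar, RingQuot.liftAlgHom_mkAlgHom_apply, map_mul, map_pow,
    rho_x, rho_y]
  show ((Yop K ^ i) * (Xop K ^ j)) _ = _
  rw [Module.End.mul_apply, Xop_pow, Yop_pow]

lemma jfam_indep : LinearIndependent K (jfam K) := by
  have h : LinearIndependent K (fun p : ℕ × ℕ => Finsupp.single p (1 : K)) := by
    have := (Finsupp.basisSingleOne (ι := ℕ × ℕ) (R := K)).linearIndependent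
    rwa [Finsupp.coe_basisSingleOne] at this
  let T : JacobsonAlgebra K →ₗ[K] ((ℕ × ℕ) →₀ K) :=
    { toFun := fun a => rhoBar K a (Finsupp.single ((0 : ℕ), (0 : ℕ)) (1 : K)),
      map_add' := by intro a b; simp,
      map_smul' := by intro c a; simp }
  refine LinearIndependent.of_comp T ?_
  convert h using 1
  funext p
  show rhoBar K (jfam K p) _ = _
  exact rhoBar_jfam K p

lemma jmk_xy : jmk K (Xgen K * Ygen K) = 1 := by
  have := RingQuot.mkAlgHom_rel K (jacRel.rel (K := K))
  simpa [jmk] using this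

lemma jmk_xpow_ypow (j k : ℕ) :
    jmk K (Xgen K ^ j * Ygen K ^ k) = jmk K (Ygen K ^ (k - j) * Xgen K ^ (j - k)) := by
  induction j generalizing k with
  | zero => simp
  | succ n ih =>
    cases k with
    | zero => simp
    | succ m =>
      have e : Xgen K ^ (n + 1) * Ygen K ^ (m + 1)
          = Xgen K ^ n * (Xgen K * Ygen K) * Ygen K ^ m := by
        rw [pow_succ, pow_succ']
        simp only [mul_assoc]
      rw [e, map_mul, map_mul, jmk_xy, mul_one, ← map_mul, ih]
      rw [Nat.succ_sub_succ, Nat.succ_sub_succ]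

lemma jfam_mul (p q : ℕ × ℕ) :
    jfam K p * jfam K q = jfam K (p.1 + (q.1 - p.2), (p.2 - q.1) + q.2) := by
  obtain ⟨i, j⟩ := p; obtain ⟨k, l⟩ := q
  simp only [jfam, ← map_mul]
  have e : Ygen K ^ i * Xgen K ^ j * (Ygen K ^ k * Xgen K ^ l)
      = Ygen K ^ i * (Xgen K ^ j * Ygen K ^ k) * Xgen K ^ l := by
    simp only [mul_assoc]
  rw [e, map_mul, map_mul, jmk_xpow_ypow, ← map_mul, ← map_mul]
  congr 1
  rw [pow_add, pow_add]
  simp only [mul_assoc]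

lemma jfam_span : ⊤ ≤ Submodule.span K (Set.range (jfam K)) := by
  set M := Submodule.span K (Set.range (jfam K)) with hM
  have h1 : (1 : JacobsonAlgebra K) ∈ M := by
    have : jfam K (0, 0) = 1 := by simp [jfam, jmk]
    rw [← this]
    exact Submodule.subset_span ⟨(0, 0), rfl⟩
  have hmul : ∀ a b : JacobsonAlgebra K, a ∈ M → b ∈ M → a * b ∈ M := by
    intro a b ha hb
    have h2 : M * M ≤ M := by
      rw [hM, Submodule.span_mul_span]
      refine Submodule.span_le.2 ?_
      rintro z ⟨u, ⟨p, rfl⟩, v, ⟨q, rfl⟩, rfl⟩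
      show jfam K p * jfam K q ∈ Submodule.span K (Set.range (jfam K))
      rw [jfam_mul]
      exact Submodule.subset_span ⟨_, rfl⟩
    exact h2 (Submodule.mul_mem_mul ha hb)
  let SA : Subalgebra K (JacobsonAlgebra K) := M.toSubalgebra h1 hmul
  have htop : (⊤ : Subalgebra K (JacobsonAlgebra K)) ≤ SA := by
    have hadj : Algebra.adjoin K ((jmk K) '' Set.range (FreeAlgebra.ι K)) = ⊤ := by
      rw [← AlgHom.map_adjoin, FreeAlgebra.adjoin_range_ι, Algebra.map_top]
      exact (AlgHom.range_eq_top _).2 (RingQuot.mkAlgHom_surjective K (jacRel K))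
    rw [← hadj]
    refine Algebra.adjoin_le ?_
    rintro z ⟨w, ⟨b, rfl⟩, rfl⟩
    cases b
    · have : jmk K (FreeAlgebra.ι K false) = jfam K (1, 0) := by
        simp [jfam, Ygen]
      show jmk K (FreeAlgebra.ι K false) ∈ M
      rw [this]
      exact Submodule.subset_span ⟨_, rfl⟩
    · have : jmk K (FreeAlgebra.ι K true) = jfam K (0, 1) := by
        simp [jfam, Xgen]
      show jmk K (FreeAlgebra.ι K true) ∈ M
      rw [this]
      exact Submodule.subset_span ⟨_, rfl⟩
  intro a _
  exact htop (by trivial)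

/-- for a field `K`, the monomials `yⁱxʲ` (for `i, j ≥ 0`) form a
`K`-vector space basis of the Jacobson algebra `A = K⟨x,y⟩/(xy − 1)`. -/
theorem stmt_18 :
    ∃ B : Module.Basis (ℕ × ℕ) K (JacobsonAlgebra K),
      ∀ p : ℕ × ℕ, B p = jmk K (Ygen K ^ p.1 * Xgen K ^ p.2) := by
  refine ⟨Module.Basis.mk (jfam_indep K) (jfam_span K), fun p => ?_⟩
  rw [Module.Basis.mk_apply]
  rfl
end
end
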